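/- Let Σ be a 2×2 real symmetric positive definite matrix and let x be a 2×2 real symmetric positive definite matrix with det x = 1. Set Σ̄ = (det Σ)^{-1/2} Σ (so det Σ̄ = 1), and let δ = ‖log(Σ̄^{-1/2} x Σ̄^{-1/2})‖_F / √2, where Σ̄^{1/2} is the positive definite square root of Σ̄, log is the matrix logarithm of a positive definite matrix, and ‖·‖_F is the Frobenius norm. Then trace(Σ⁻¹ x) = 2 (det Σ)^{-1/2} cosh(δ). Equivalently, (2 / trace(Σ⁻¹ x)) = (det Σ)^{1/2} / cosh(δ), so that the projective Wishart density (2/trace(Σ⁻¹x))^{dn/2} at x is proportional to cosh(δ)^{-n}. -/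

import Mathlib

open Matrix

section helpers
variable {n : Type*} [Fintype n] [DecidableEq n]

lemma posDef_smul' {M : Matrix n n ℝ} (hM : M.PosDef) {c : ℝ}
    (hc : 0 < c) : (c • M).PosDef := by
  refine ⟨?_, fun v hv => ?_⟩
  · unfold Matrix.IsHermitian
    rw [conjTranspose_smul, hM.1.eq]
    simp
  · have := smul_pos hc (hM.2 hv)
    simp only [Matrix.smul_apply, smul_eq_mul, star_trivial] at this ⊢
    simp_rw [show ∀ a b d : ℝ, a * (c * b) * d = c * (a * b * d) from fun a b d => by ring,
      ← Finsupp.mul_sum]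
    exact this

lemma cfc_mul_cfc {M : Matrix n n ℝ} (hM : M.IsHermitian) (f g : ℝ → ℝ) :
    hM.cfc f * hM.cfc g = hM.cfc (fun t => f t * g t) := by
  have hU : (star (hM.eigenvectorUnitary : Matrix n n ℝ)) * hM.eigenvectorUnitary = 1 :=
    Unitary.coe_star_mul_self _
  set U : Matrix n n ℝ := (hM.eigenvectorUnitary : Matrix n n ℝ) with hUdef
  simp only [Matrix.IsHermitian.cfc, Unitary.conjStarAlgAut_apply]
  rw [Matrix.mul_assoc (U * _), ← Matrix.mul_assoc (star U), ← Matrix.mul_assoc (star U), hU,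
    one_mul, ← Matrix.mul_assoc, Matrix.mul_assoc U, diagonal_mul_diagonal]
  rw [hUdef]
  congr 2

lemma trace_cfc {M : Matrix n n ℝ} (hM : M.IsHermitian) (f : ℝ → ℝ) :
    (hM.cfc f).trace = ∑ i, f (hM.eigenvalues i) := by
  have hU : (star (hM.eigenvectorUnitary : Matrix n n ℝ)) * hM.eigenvectorUnitary = 1 :=
    Unitary.coe_star_mul_self _
  rw [Matrix.IsHermitian.cfc, Unitary.conjStarAlgAut_apply, trace_mul_cycle, hU, one_mul, trace_diagonal]
  simp [Function.comp]

lemma cfc_isHermitian {M : Matrix n n ℝ} (hM : M.IsHermitian) (f : ℝ → ℝ) :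
    (hM.cfc f).IsHermitian := by
  rw [Matrix.IsHermitian.cfc, Unitary.conjStarAlgAut_apply]
  unfold Matrix.IsHermitian
  simp only [conjTranspose_mul, conjTranspose_conjTranspose, diagonal_conjTranspose]
  rw [Matrix.mul_assoc]
  simp [Matrix.star_eq_conjTranspose]

lemma cfc_eq_self {M : Matrix n n ℝ} (hM : M.IsHermitian) :
    hM.cfc (fun t => t) = M := by
  rw [Matrix.IsHermitian.cfc]
  convert hM.spectral_theorem.symm using 3
  rfl

end helpers

open scoped Classical in
/-- The positive semidefinite square root of a matrix, extended to a total function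
(junk value `0` when the matrix is not positive semidefinite). -/
noncomputable def matSqrt {d : ℕ} (A : Matrix (Fin d) (Fin d) ℝ) : Matrix (Fin d) (Fin d) ℝ :=
  if hA : A.PosSemidef then
    hA.1.eigenvectorUnitary.1 * diagonal (Real.sqrt ∘ hA.1.eigenvalues) *
      (star hA.1.eigenvectorUnitary : Matrix (Fin d) (Fin d) ℝ)
  else 0

open scoped Classical in
/-- The matrix logarithm of a Hermitian matrix, obtained by applying `Real.log` to the
eigenvalues in a spectral decomposition (continuous functional calculus), extended to a
total function (junk value `0` on non-Hermitian matrices). -/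
noncomputable def matLog {d : ℕ} (A : Matrix (Fin d) (Fin d) ℝ) : Matrix (Fin d) (Fin d) ℝ :=
  if hA : A.IsHermitian then hA.cfc Real.log else 0

/-- The Frobenius norm of a real matrix: the square root of the sum of the squares of the
entries. -/
noncomputable def frobeniusNorm {d : ℕ} (M : Matrix (Fin d) (Fin d) ℝ) : ℝ :=
  Real.sqrt (∑ i, ∑ j, M i j ^ 2)

/-- for a `2 × 2` real symmetric positive definite `Σ` and a determinant-one
symmetric positive definite `x`, with `Σ̄ = (det Σ)^{-1/2} Σ` and
`δ = ‖log(Σ̄^{-1/2} x Σ̄^{-1/2})‖_F / √2` the affine-invariant distance from `x` to `Σ̄`,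
one has `trace (Σ⁻¹ x) = 2 (det Σ)^{-1/2} cosh δ`. -/
theorem trace_inv_mul_eq_cosh_dist (S x : Matrix (Fin 2) (Fin 2) ℝ)
    (hS : S.PosDef) (hx : x.PosDef) (hdetx : x.det = 1) :
    (S⁻¹ * x).trace
      = 2 * S.det ^ (-(1 : ℝ) / 2) *
        Real.cosh
          (frobeniusNorm (matLog
              ((matSqrt ((S.det ^ (-(1 : ℝ) / 2)) • S))⁻¹ * x *
                (matSqrt ((S.det ^ (-(1 : ℝ) / 2)) • S))⁻¹)) / Real.sqrt 2) := by
  have hdS : 0 < S.det := hS.det_pos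
  set c : ℝ := S.det ^ (-(1 : ℝ) / 2) with hc
  have hcpos : 0 < c := Real.rpow_pos_of_pos hdS _
  have hc2 : c ^ 2 * S.det = 1 := by
    rw [hc, ← Real.rpow_natCast (S.det ^ (-(1:ℝ)/2)) 2, ← Real.rpow_mul hdS.le]
    norm_num
    rw [Real.rpow_neg_one]
    exact inv_mul_cancel₀ hdS.ne'
  have hSbar : (c • S).PosDef := posDef_smul' hS hcpos
  have hdetSbar : (c • S).det = 1 := by
    rw [det_smul, Fintype.card_fin]
    exact hc2
  -- the square root
  have hA_def : matSqrt (c • S) = hSbar.posSemidef.1.eigenvectorUnitary.1 * diagonal (Real.sqrt ∘ hSbar.posSemidef.1.eigenvalues) *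
      (star hSbar.posSemidef.1.eigenvectorUnitary : Matrix (Fin 2) (Fin 2) ℝ) := by
    unfold matSqrt
    rw [dif_pos hSbar.posSemidef]
  set A : Matrix (Fin 2) (Fin 2) ℝ := hSbar.posSemidef.1.eigenvectorUnitary.1 * diagonal (Real.sqrt ∘ hSbar.posSemidef.1.eigenvalues) *
      (star hSbar.posSemidef.1.eigenvectorUnitary : Matrix (Fin 2) (Fin 2) ℝ) with hAdef
  have hAps : A.PosSemidef := by
    have := (posSemidef_diagonal_iff.mpr (fun i => Real.sqrt_nonneg _) :
      (diagonal (Real.sqrt ∘ hSbar.posSemidef.1.eigenvalues)).PosSemidef).mul_mul_conjTranspose_same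
        (hSbar.posSemidef.1.eigenvectorUnitary : Matrix (Fin 2) (Fin 2) ℝ)
    rw [hAdef]
    simpa [star_eq_conjTranspose] using this
  have hAA : A * A = c • S := by
    have hH := hSbar.posSemidef.1
    have hU : (star (hSbar.posSemidef.1.eigenvectorUnitary : Matrix (Fin 2) (Fin 2) ℝ)) *
        hSbar.posSemidef.1.eigenvectorUnitary = 1 := Unitary.coe_star_mul_self _
    have hD : diagonal (Real.sqrt ∘ hSbar.posSemidef.1.eigenvalues) *
        diagonal (Real.sqrt ∘ hSbar.posSemidef.1.eigenvalues) =
        diagonal (RCLike.ofReal ∘ hSbar.posSemidef.1.eigenvalues) := by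
      rw [diagonal_mul_diagonal]
      congr 1
      funext i
      simp [Real.mul_self_sqrt (hSbar.posSemidef.eigenvalues_nonneg i)]
    conv_rhs => rw [hSbar.posSemidef.1.spectral_theorem, Unitary.conjStarAlgAut_apply]
    rw [hAdef, Matrix.mul_assoc (_ * _), ← Matrix.mul_assoc (star _), ← Matrix.mul_assoc (star _),
      hU, Matrix.one_mul, ← Matrix.mul_assoc (_ * _) (diagonal _),
      Matrix.mul_assoc _ (diagonal _) (diagonal _), hD]
  have hdetA2 : A.det * A.det = 1 := by
    have := congrArg Matrix.det hAA
    rw [det_mul] at this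
    rw [this, hdetSbar]
  have hAdetne : A.det ≠ 0 := fun h => by simp [h] at hdetA2
  have hAinv : A * A⁻¹ = 1 := mul_nonsing_inv A (isUnit_iff_ne_zero.mpr hAdetne)
  -- B
  set B : Matrix (Fin 2) (Fin 2) ℝ := A⁻¹ * x * A⁻¹ with hBdef
  have hAiH : A⁻¹.IsHermitian := hAps.1.inv
  have hBps : B.PosSemidef := by
    have := hx.posSemidef.conjTranspose_mul_mul_same A⁻¹
    rwa [hAiH.eq] at this
  have hB : B.IsHermitian := hBps.1
  have hdetB : B.det = 1 := by
    rw [hBdef, det_mul, det_mul, hdetx, mul_one, det_nonsing_inv, Ring.inverse_eq_inv',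
      ← mul_inv, hdetA2, inv_one]
  -- eigenvalues of B
  set μ := hB.eigenvalues with hμ
  have hprod : μ 0 * μ 1 = 1 := by
    have := hB.det_eq_prod_eigenvalues
    rw [hdetB, Fin.prod_univ_two] at this
    exact this.symm
  have hμ0 : 0 < μ 0 := by
    have h0 : 0 ≤ μ 0 := hBps.eigenvalues_nonneg 0
    rcases h0.lt_or_eq with h | h
    · exact h
    · exfalso
      rw [← h, zero_mul] at hprod
      exact zero_ne_one hprod
  have hμ1 : μ 1 = (μ 0)⁻¹ := by
    field_simp
    linarith [hprod]
  -- trace of B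
  have htraceB : B.trace = μ 0 + μ 1 := by
    conv_lhs => rw [← cfc_eq_self hB]
    rw [trace_cfc, Fin.sum_univ_two]
  -- trace identity
  have hSinv : S⁻¹ = c • (A⁻¹ * A⁻¹) := by
    apply inv_eq_right_inv
    rw [mul_smul_comm, ← smul_mul_assoc, ← hAA, Matrix.mul_assoc,
      ← Matrix.mul_assoc A A⁻¹ A⁻¹, hAinv, Matrix.one_mul, hAinv]
  have htr : (S⁻¹ * x).trace = c * B.trace := by
    rw [hSinv, smul_mul_assoc, trace_smul, Matrix.mul_assoc, trace_mul_comm, smul_eq_mul]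
  -- the log matrix
  have hlog : matLog (A⁻¹ * x * A⁻¹) = hB.cfc Real.log := dif_pos hB
  set M : Matrix (Fin 2) (Fin 2) ℝ := hB.cfc Real.log with hMdef
  have hMH : M.IsHermitian := cfc_isHermitian hB _
  have hfrob2 : ∑ i, ∑ j, M i j ^ 2 = Real.log (μ 0) ^ 2 + Real.log (μ 1) ^ 2 := by
    have h1 : ∑ i, ∑ j, M i j ^ 2 = (M * M).trace := by
      rw [Matrix.trace]
      simp only [Matrix.diag, Matrix.mul_apply]
      refine Finset.sum_congr rfl fun i _ => Finset.sum_congr rfl fun j _ => ?_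
      rw [pow_two]
      congr 1
      rw [← hMH.apply j i]
      simp
    rw [h1, hMdef, cfc_mul_cfc, trace_cfc, Fin.sum_univ_two]
    ring_nf
    rfl
  set a : ℝ := Real.log (μ 0) with ha
  have hloga : Real.log (μ 1) = -a := by rw [hμ1, Real.log_inv]
  have hfrob : frobeniusNorm M / Real.sqrt 2 = |a| := by
    rw [frobeniusNorm, hfrob2, hloga]
    have : a ^ 2 + (-a) ^ 2 = 2 * a ^ 2 := by ring
    rw [this, Real.sqrt_mul (by norm_num), Real.sqrt_sq_eq_abs, mul_comm,
      mul_div_assoc, div_self (Real.sqrt_ne_zero'.mpr (by norm_num)), mul_one]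
  have hexp : μ 0 + μ 1 = 2 * Real.cosh a := by
    rw [Real.cosh_eq, hμ1, ← Real.exp_log hμ0, ← ha, ← Real.exp_neg]
    ring
  calc (S⁻¹ * x).trace = c * B.trace := htr
    _ = c * (2 * Real.cosh a) := by rw [htraceB, hexp]
    _ = 2 * c * Real.cosh (|a|) := by rw [Real.cosh_abs]; ring
    _ = _ := by rw [hA_def, hlog, hfrob]
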